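/- Let R be a nonabelian group whose order is a product of two distinct primes, and let S ⊆ R. If Cay(R,S) is a nontrivial generalised wreath product with respect to some subgroups K and H (1 < K ⊴ H < R, K(S\H) = S\H = (S\H)K), then there exists a nontrivial automorphism of R fixing S setwise. -/
import Mathlib


open scoped Pointwise

/-- Divisors of a product of two primes. -/
lemma dvd_prime_mul_prime {p q m : ℕ} (hp : p.Prime) (hq : q.Prime)
    (h : m ∣ p * q) : m = 1 ∨ m = p ∨ m = q ∨ m = p * q := by
  rcases (Nat.dvd_mul.mp h) with ⟨a, b, ha, hb, rfl⟩
  rcases (Nat.dvd_prime hp).mp ha with rfl | rfl <;>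
    rcases (Nat.dvd_prime hq).mp hb with rfl | rfl <;> simp

/-- for a nonabelian group of order `pq` (`p ≠ q` primes), a nontrivial
generalised wreath product `Cay(R,S)` admits a nontrivial automorphism of `R` fixing `S`. -/
theorem stmt5 {R : Type*} [Group R] [Finite R] (p q : ℕ)
    (hp : p.Prime) (hq : q.Prime) (hpq : p ≠ q)
    (hcard : Nat.card R = p * q)
    (hnab : ¬ ∀ a b : R, a * b = b * a)
    (S : Set R) (K H : Subgroup R)
    (hK : ⊥ < K) (hKH : K ≤ H)
    (hnorm : ∀ h ∈ H, ∀ k ∈ K, h * k * h⁻¹ ∈ K)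
    (hH : H < ⊤)
    (h1 : (K : Set R) * (S \ (H : Set R)) = S \ (H : Set R))
    (h2 : (S \ (H : Set R)) * (K : Set R) = S \ (H : Set R)) :
    ∃ φ : MulAut R, φ ≠ 1 ∧ φ '' S = S := by
  -- the center of R is trivial
  have hZ : Subgroup.center R = ⊥ := by
    by_contra hZ
    have hdvd : Nat.card (R ⧸ Subgroup.center R) ∣ p * q := by
      rw [← hcard]
      exact ⟨Nat.card (Subgroup.center R),
        Subgroup.card_eq_card_quotient_mul_card_subgroup (Subgroup.center R)⟩
    have hne : Nat.card (R ⧸ Subgroup.center R) ≠ p * q := by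
      intro hEq
      have h2' := Subgroup.card_eq_card_quotient_mul_card_subgroup (Subgroup.center R)
      rw [hcard, hEq] at h2'
      have hpos : 0 < p * q := Nat.mul_pos hp.pos hq.pos
      have : Nat.card (Subgroup.center R) = 1 := by
        nlinarith [Nat.card_pos (α := Subgroup.center R)]
      exact hZ (Subgroup.eq_bot_of_card_eq _ this)
    have : IsCyclic (R ⧸ Subgroup.center R) := by
      rcases dvd_prime_mul_prime hp hq hdvd with h | h | h | h
      · have : Subsingleton (R ⧸ Subgroup.center R) := Nat.card_eq_one_iff_unique.mp h |>.1
        infer_instance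
      · exact @isCyclic_of_prime_card _ _ _ ⟨hp⟩ h
      · exact @isCyclic_of_prime_card _ _ _ ⟨hq⟩ h
      · exact absurd h hne
    exact hnab (commutative_of_cyclic_center_quotient (QuotientGroup.mk' _)
      (le_of_eq (QuotientGroup.ker_mk' _)))
  -- H has prime order, hence is commutative
  have hHcard : (Nat.card H).Prime := by
    have hdvd : Nat.card H ∣ p * q := hcard ▸ Subgroup.card_subgroup_dvd_card H
    have hne1 : Nat.card H ≠ 1 := by
      intro h
      have : H = ⊥ := Subgroup.eq_bot_of_card_eq _ h
      exact absurd (le_bot_iff.mp (this ▸ hKH)) (hK.ne')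
    have hnetop : Nat.card H ≠ p * q := by
      intro h
      exact hH.ne (Subgroup.card_eq_iff_eq_top H |>.mp (h.trans hcard.symm))
    rcases dvd_prime_mul_prime hp hq hdvd with h | h | h | h
    · exact absurd h hne1
    · exact h ▸ hp
    · exact h ▸ hq
    · exact absurd h hnetop
  have hHcomm : ∀ a ∈ H, ∀ b ∈ H, a * b = b * a := by
    haveI : Fact (Nat.card H).Prime := ⟨hHcard⟩
    haveI : IsCyclic H := isCyclic_of_prime_card rfl
    letI := IsCyclic.commGroup (α := H)
    intro a ha b hb
    exact congrArg Subtype.val (mul_comm (⟨a, ha⟩ : H) ⟨b, hb⟩)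
  -- pick a nontrivial element of K
  obtain ⟨⟨k, hkK⟩, hk1⟩ := Subgroup.ne_bot_iff_exists_ne_one.mp hK.ne'
  have hk1 : k ≠ 1 := by simpa using hk1
  -- conjugation by any element of K preserves S
  have claim : ∀ k' ∈ K, ∀ s ∈ S, k' * s * k'⁻¹ ∈ S := by
    intro k' hk' s hs
    by_cases hsH : s ∈ (H : Set R)
    · have : k' * s = s * k' := hHcomm k' (hKH hk') s hsH
      rw [this, mul_assoc, mul_inv_cancel, mul_one]
      exact hs
    · have hsd : s ∈ S \ (H : Set R) := ⟨hs, hsH⟩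
      have h3 : k' * s ∈ S \ (H : Set R) := h1 ▸ Set.mul_mem_mul hk' hsd
      have h4 : k' * s * k'⁻¹ ∈ S \ (H : Set R) :=
        h2 ▸ Set.mul_mem_mul h3 (K.inv_mem hk')
      exact h4.1
  refine ⟨MulAut.conj k, ?_, ?_⟩
  · intro h
    apply hk1
    have hkZ : k ∈ Subgroup.center R := by
      rw [Subgroup.mem_center_iff]
      intro g
      have := congrArg (fun ψ : MulAut R => ψ g) h
      simp only [MulAut.conj_apply, MulAut.one_apply] at this
      have hgk : k * g * k⁻¹ = g := this
      calc g * k = (k * g * k⁻¹) * k := by rw [hgk]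
        _ = k * g := by group
    rw [hZ] at hkZ
    simpa using hkZ
  · apply Set.eq_of_subset_of_subset
    · rintro _ ⟨s, hs, rfl⟩
      exact claim k hkK s hs
    · intro s hs
      have hmem : k⁻¹ * s * k ∈ S := by
        have := claim k⁻¹ (K.inv_mem hkK) s hs
        simpa using this
      exact ⟨k⁻¹ * s * k, hmem, by simp [MulAut.conj_apply]; group⟩
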